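/- Let f₀ ∈ PL₀(I) be a non-identity element, let (a,c) be an orbital of f₀ on which f₀(x) > x, and pick p ∈ (a,c). Let f₁ ∈ PL₀(I) be any function such that f₁ = f₀ on [p,c], f₁ is the identity on (a, f₀⁻¹(p)), f₀ and f₁ commute outside (a,c), and every orbital of f₁ meeting an orbital of f₀ is contained in it. Then f₀ and f₁ generate a subgroup of PL₀(I) isomorphic to Thompson's group F via x₀ ↦ f₀, x₁ ↦ f₁. -/

import Mathlib

set_option linter.unusedSectionVars false


/-- The support of a permutation `f` of `ℝ` : the set of points moved by `f`. -/
def Supp (f : Equiv.Perm ℝ) : Set ℝ := {x : ℝ | f x ≠ x}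

/-- `IsPL0 f` says that `f` is (the extension by the identity on `ℝ \ [0,1]` of) a
piecewise-linear orientation-preserving homeomorphism of the unit interval `[0,1]`
with only finitely many breakpoints; this represents membership in `PL₀(I)`.
The finite set `B` collects the possible points of non-differentiability: away from
`B` the map is locally affine. -/
def IsPL0 (f : Equiv.Perm ℝ) : Prop :=
  StrictMono ⇑f ∧ (∀ x : ℝ, x ≤ 0 → f x = x) ∧ (∀ x : ℝ, 1 ≤ x → f x = x) ∧
    ∃ B : Finset ℝ, ∀ x : ℝ, x ∉ B → ∃ s t : ℝ, ∀ᶠ y in nhds x, f y = s * y + t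

/-- `IsOrbital f a b` : the open interval `(a,b)` is an orbital of `f`, i.e. a
connected component of `Supp f` (an open interval contained in the support whose
endpoints are fixed by `f`). -/
def IsOrbital (f : Equiv.Perm ℝ) (a b : ℝ) : Prop :=
  a < b ∧ Set.Ioo a b ⊆ Supp f ∧ f a = a ∧ f b = b
open scoped commutatorElement
/-- The relators of the standard finite presentation
`F ≅ ⟨x₀, x₁ | [x₀x₁⁻¹, x₁^{x₀}] = [x₀x₁⁻¹, x₁^{x₀²}] = 1⟩` of Thompson's group `F`,
written out with the paper's word-order (right-action) convention translated into
Mathlib's multiplication: the word `x₀x₁⁻¹` is `x₁⁻¹ * x₀` and `x₁^{x₀} = x₀⁻¹x₁x₀`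
is `x₀ * x₁ * x₀⁻¹`. -/
def thompsonRels : Set (FreeGroup (Fin 2)) :=
  { ⁅(FreeGroup.of (1 : Fin 2))⁻¹ * FreeGroup.of (0 : Fin 2),
      FreeGroup.of (0 : Fin 2) * FreeGroup.of (1 : Fin 2) * (FreeGroup.of (0 : Fin 2))⁻¹⁆,
    ⁅(FreeGroup.of (1 : Fin 2))⁻¹ * FreeGroup.of (0 : Fin 2),
      FreeGroup.of (0 : Fin 2) ^ 2 * FreeGroup.of (1 : Fin 2) *
        (FreeGroup.of (0 : Fin 2) ^ 2)⁻¹⁆ }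

/-- Thompson's group `F`, given by its standard finite presentation. -/
abbrev ThompsonF : Type := PresentedGroup thompsonRels

theorem Equiv.Perm.apply_inv_self {α : Type*} (f : Equiv.Perm α) (x : α) : f (f⁻¹ x) = x :=
  f.apply_symm_apply x
theorem Equiv.Perm.inv_apply_self {α : Type*} (f : Equiv.Perm α) (x : α) : f⁻¹ (f x) = x :=
  f.symm_apply_apply x




open Set

namespace NicePairF

/-- Bundled hypotheses for the nice pair construction. -/
structure NP (f₀ f₁ : Equiv.Perm ℝ) (a c p : ℝ) : Prop where
  m₀ : StrictMono ⇑f₀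
  m₁ : StrictMono ⇑f₁
  hap : a < p
  hpc : p < c
  hfa : f₀ a = a
  hfc : f₀ c = c
  hup : ∀ x ∈ Set.Ioo a c, x < f₀ x
  hagree : ∀ x ∈ Set.Icc p c, f₁ x = f₀ x
  hid : ∀ x ∈ Set.Ioo a (f₀⁻¹ p), f₁ x = x
  hcommout : ∀ x ∉ Set.Ioo a c, f₀ (f₁ x) = f₁ (f₀ x)

namespace NP

variable {f₀ f₁ : Equiv.Perm ℝ} {a c p : ℝ} (H : NP f₀ f₁ a c p)

include H

theorem hac : a < c := H.hap.trans H.hpc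

theorem cont₀ : Continuous ⇑f₀ := (H.m₀.orderIsoOfSurjective _ f₀.surjective).continuous
theorem cont₁ : Continuous ⇑f₁ := (H.m₁.orderIsoOfSurjective _ f₁.surjective).continuous

theorem m₀inv : StrictMono ⇑f₀⁻¹ := by
  intro x y hxy
  have := H.m₀.lt_iff_lt (a := f₀⁻¹ x) (b := f₀⁻¹ y)
  simp only [Equiv.Perm.apply_inv_self] at this
  exact this.mp hxy

theorem m₁inv : StrictMono ⇑f₁⁻¹ := by
  intro x y hxy
  have := H.m₁.lt_iff_lt (a := f₁⁻¹ x) (b := f₁⁻¹ y)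
  simp only [Equiv.Perm.apply_inv_self] at this
  exact this.mp hxy

theorem f₀inv_a : f₀⁻¹ a = a := by
  have := H.hfa; nth_rewrite 1 [← this]; exact f₀.inv_apply_self a
theorem f₀inv_c : f₀⁻¹ c = c := by
  have := H.hfc; nth_rewrite 1 [← this]; exact f₀.inv_apply_self c

/-- `f₀` maps `(a,c)` into itself. -/
theorem mapsIoo₀ : ∀ x ∈ Ioo a c, f₀ x ∈ Ioo a c := by
  intro x hx
  exact ⟨H.hfa ▸ H.m₀ hx.1, H.hfc ▸ H.m₀ hx.2⟩

theorem mapsIoo₀inv : ∀ x ∈ Ioo a c, f₀⁻¹ x ∈ Ioo a c := by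
  intro x hx
  constructor
  · have := H.m₀inv hx.1; rwa [H.f₀inv_a] at this
  · have := H.m₀inv hx.2; rwa [H.f₀inv_c] at this

theorem hdown : ∀ x ∈ Ioo a c, f₀⁻¹ x < x := by
  intro x hx
  have h1 : f₀⁻¹ x ∈ Ioo a c := H.mapsIoo₀inv x hx
  have := H.hup _ h1
  rwa [f₀.apply_inv_self] at this

theorem q_mem : f₀⁻¹ p ∈ Ioo a p :=
  ⟨(H.mapsIoo₀inv p ⟨H.hap, H.hpc⟩).1, H.hdown p ⟨H.hap, H.hpc⟩⟩

theorem f₁_fix_Ioo : ∀ x ∈ Ioo a (f₀⁻¹ p), f₁ x = x := H.hid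

theorem f₁_q : f₁ (f₀⁻¹ p) = f₀⁻¹ p := by
  set q := f₀⁻¹ p with hq
  have haq : a < q := H.q_mem.1
  have h1 : Filter.Tendsto ⇑f₁ (nhdsWithin q (Iio q)) (nhds (f₁ q)) :=
    (H.cont₁.continuousAt).continuousWithinAt.tendsto
  have h2 : Filter.Tendsto ⇑f₁ (nhdsWithin q (Iio q)) (nhds q) := by
    have : Set.EqOn ⇑f₁ id (Ioo a q) := fun x hx => H.hid x hx
    have hmem : Ioo a q ∈ nhdsWithin q (Iio q) := Ioo_mem_nhdsLT haq
    refine Filter.Tendsto.congr' ?_ (Filter.tendsto_id.mono_left nhdsWithin_le_nhds)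
    filter_upwards [hmem] with x hx
    exact (this hx).symm
  exact tendsto_nhds_unique h1 h2

theorem f₁_a : f₁ a = a := by
  have haq : a < f₀⁻¹ p := H.q_mem.1
  have h1 : Filter.Tendsto ⇑f₁ (nhdsWithin a (Ioi a)) (nhds (f₁ a)) :=
    (H.cont₁.continuousAt).continuousWithinAt.tendsto
  have h2 : Filter.Tendsto ⇑f₁ (nhdsWithin a (Ioi a)) (nhds a) := by
    have hmem : Ioo a (f₀⁻¹ p) ∈ nhdsWithin a (Ioi a) := Ioo_mem_nhdsGT haq
    refine Filter.Tendsto.congr' ?_ (Filter.tendsto_id.mono_left nhdsWithin_le_nhds)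
    filter_upwards [hmem] with x hx
    exact (H.hid x hx).symm
  exact tendsto_nhds_unique h1 h2

theorem f₁_c : f₁ c = c := by
  rw [H.hagree c ⟨le_of_lt H.hpc, le_refl c⟩, H.hfc]

theorem f₁_fix_Ioc : ∀ x ∈ Ioc a (f₀⁻¹ p), f₁ x = x := by
  rintro x ⟨h1, h2⟩
  rcases eq_or_lt_of_le h2 with rfl | h
  · exact H.f₁_q
  · exact H.hid x ⟨h1, h⟩

theorem f₁inv_a : f₁⁻¹ a = a := by
  have := H.f₁_a; nth_rewrite 1 [← this]; exact f₁.inv_apply_self a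
theorem f₁inv_c : f₁⁻¹ c = c := by
  have := H.f₁_c; nth_rewrite 1 [← this]; exact f₁.inv_apply_self c

theorem mapsIoo₁ : ∀ x ∈ Ioo a c, f₁ x ∈ Ioo a c := by
  intro x hx; exact ⟨H.f₁_a ▸ H.m₁ hx.1, H.f₁_c ▸ H.m₁ hx.2⟩

theorem mapsIoo₁inv : ∀ x ∈ Ioo a c, f₁⁻¹ x ∈ Ioo a c := by
  intro x hx
  constructor
  · have := H.m₁inv hx.1; rwa [H.f₁inv_a] at this
  · have := H.m₁inv hx.2; rwa [H.f₁inv_c] at this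

end NP
end NicePairF
-- chunk B (appended to A for testing)
namespace NicePairF

/-- The images `X 0 = f₀`, `X (n+1) = f₀ⁿ f₁ f₀⁻ⁿ` of the standard generators
`x₀, x₁, x₂, …` of Thompson's group `F`. -/
def X (f₀ f₁ : Equiv.Perm ℝ) : ℕ → Equiv.Perm ℝ
  | 0 => f₀
  | (n+1) => f₀^n * f₁ * (f₀^n)⁻¹

namespace NP

open Set

variable {f₀ f₁ : Equiv.Perm ℝ} {a c p : ℝ} (H : NP f₀ f₁ a c p)

include H

theorem pow_sm (n : ℕ) : StrictMono ⇑(f₀^n) := by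
  induction n with
  | zero => simpa using strictMono_id
  | succ k ih =>
      have : (f₀^(k+1) : Equiv.Perm ℝ) = f₀^k * f₀ := pow_succ f₀ k
      rw [this]
      exact fun x y hxy => ih (H.m₀ hxy)

theorem invpow_sm (n : ℕ) : StrictMono ⇑((f₀^n)⁻¹) := by
  intro x y hxy
  have := (H.pow_sm n).lt_iff_lt (a := (f₀^n)⁻¹ x) (b := (f₀^n)⁻¹ y)
  simp only [Equiv.Perm.apply_inv_self] at this
  exact this.mp hxy

theorem pow_a (n : ℕ) : (f₀^n) a = a := by
  induction n with
  | zero => simp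
  | succ k ih => rw [pow_succ]; simp only [Equiv.Perm.mul_apply, H.hfa, ih]

theorem pow_c (n : ℕ) : (f₀^n) c = c := by
  induction n with
  | zero => simp
  | succ k ih => rw [pow_succ]; simp only [Equiv.Perm.mul_apply, H.hfc, ih]

theorem invpow_a (n : ℕ) : ((f₀^n)⁻¹) a = a := by
  have := H.pow_a n; nth_rewrite 1 [← this]; exact (f₀^n).inv_apply_self a
theorem invpow_c (n : ℕ) : ((f₀^n)⁻¹) c = c := by
  have := H.pow_c n; nth_rewrite 1 [← this]; exact (f₀^n).inv_apply_self c

theorem pow_mem (n : ℕ) : ∀ x ∈ Ioo a c, (f₀^n) x ∈ Ioo a c := by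
  intro x hx
  exact ⟨H.pow_a n ▸ H.pow_sm n hx.1, H.pow_c n ▸ H.pow_sm n hx.2⟩

theorem invpow_mem (n : ℕ) : ∀ x ∈ Ioo a c, ((f₀^n)⁻¹) x ∈ Ioo a c := by
  intro x hx
  exact ⟨H.invpow_a n ▸ H.invpow_sm n hx.1, H.invpow_c n ▸ H.invpow_sm n hx.2⟩

theorem le_pow (n : ℕ) : ∀ x ∈ Ioo a c, x ≤ (f₀^n) x := by
  induction n with
  | zero => intro x _; simp
  | succ k ih =>
      intro x hx
      have h1 : (f₀^(k+1) : Equiv.Perm ℝ) = f₀^k * f₀ := pow_succ f₀ k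
      rw [h1, Equiv.Perm.mul_apply]
      exact le_trans (le_of_lt (H.hup x hx)) (ih (f₀ x) (H.mapsIoo₀ x hx))

theorem invpow_le (n : ℕ) : ∀ x ∈ Ioo a c, ((f₀^n)⁻¹) x ≤ x := by
  intro x hx
  have h := H.le_pow n _ (H.invpow_mem n x hx)
  rwa [Equiv.Perm.apply_inv_self] at h

/-- the exponent is recoverable from the value at any point of `(a,c)`. -/
theorem pow_exp_strict (x : ℝ) (hx : x ∈ Ioo a c) : StrictMono (fun n : ℕ => (f₀^n) x) := by
  apply strictMono_nat_of_lt_succ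
  intro n
  have h1 : (f₀^(n+1) : Equiv.Perm ℝ) = f₀ * f₀^n := pow_succ' f₀ n
  rw [h1, Equiv.Perm.mul_apply]
  exact H.hup _ (H.pow_mem n x hx)

-- membership in the complement S of Ioo a c is preserved
theorem S₀ {x : ℝ} (hx : x ∉ Ioo a c) : f₀ x ∉ Ioo a c := by
  intro h
  exact hx (by simpa using H.mapsIoo₀inv _ h)

theorem S₀inv {x : ℝ} (hx : x ∉ Ioo a c) : f₀⁻¹ x ∉ Ioo a c := by
  intro h
  have := H.mapsIoo₀ _ h
  rw [Equiv.Perm.apply_inv_self] at this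
  exact hx this

theorem S₁ {x : ℝ} (hx : x ∉ Ioo a c) : f₁ x ∉ Ioo a c := by
  intro h
  have := H.mapsIoo₁inv _ h
  rw [Equiv.Perm.inv_apply_self] at this
  exact hx this

theorem S₁inv {x : ℝ} (hx : x ∉ Ioo a c) : f₁⁻¹ x ∉ Ioo a c := by
  intro h
  have := H.mapsIoo₁ _ h
  rw [Equiv.Perm.apply_inv_self] at this
  exact hx this

theorem Spow {x : ℝ} (n : ℕ) (hx : x ∉ Ioo a c) : (f₀^n) x ∉ Ioo a c := by
  induction n with
  | zero => simpa using hx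
  | succ k ih =>
      rw [pow_succ', Equiv.Perm.mul_apply]
      exact H.S₀ ih

theorem Sinvpow {x : ℝ} (n : ℕ) (hx : x ∉ Ioo a c) : ((f₀^n)⁻¹) x ∉ Ioo a c := by
  intro h
  have := H.pow_mem n _ h
  rw [Equiv.Perm.apply_inv_self] at this
  exact hx this

theorem swap₀ {x : ℝ} (hx : x ∉ Ioo a c) : f₀ (f₁ x) = f₁ (f₀ x) := H.hcommout x hx

theorem swap₀inv {x : ℝ} (hx : x ∉ Ioo a c) : f₀⁻¹ (f₁ x) = f₁ (f₀⁻¹ x) := by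
  have h := H.hcommout (f₀⁻¹ x) (H.S₀inv hx)
  rw [Equiv.Perm.apply_inv_self] at h
  calc f₀⁻¹ (f₁ x) = f₀⁻¹ (f₀ (f₁ (f₀⁻¹ x))) := by rw [h]
  _ = f₁ (f₀⁻¹ x) := f₀.inv_apply_self _

theorem swap_pow {x : ℝ} (n : ℕ) (hx : x ∉ Ioo a c) : (f₀^n) (f₁ x) = f₁ ((f₀^n) x) := by
  induction n with
  | zero => simp
  | succ k ih =>
      rw [pow_succ', Equiv.Perm.mul_apply, Equiv.Perm.mul_apply, ih,
        H.swap₀ (H.Spow k hx)]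

theorem swap_invpow {x : ℝ} (n : ℕ) (hx : x ∉ Ioo a c) :
    ((f₀^n)⁻¹) (f₁ x) = f₁ (((f₀^n)⁻¹) x) := by
  induction n with
  | zero => simp
  | succ k ih =>
      have e : ((f₀^(k+1))⁻¹ : Equiv.Perm ℝ) = f₀⁻¹ * (f₀^k)⁻¹ := by
        rw [pow_succ, mul_inv_rev]
      rw [e, Equiv.Perm.mul_apply, Equiv.Perm.mul_apply, ih,
        H.swap₀inv (H.Sinvpow k hx)]

end NP
end NicePairF
-- chunk C : properties of X n and g
namespace NicePairF
namespace NP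

open Set

variable {f₀ f₁ : Equiv.Perm ℝ} {a c p : ℝ} (H : NP f₀ f₁ a c p)

include H

theorem X_sm (n : ℕ) : StrictMono ⇑(X f₀ f₁ n) := by
  cases n with
  | zero => exact H.m₀
  | succ m =>
      show StrictMono ⇑(f₀^m * f₁ * (f₀^m)⁻¹)
      intro x y hxy
      simp only [Equiv.Perm.mul_apply]
      exact H.pow_sm m (H.m₁ (H.invpow_sm m hxy))

theorem X_a (n : ℕ) : (X f₀ f₁ n) a = a := by
  cases n with
  | zero => exact H.hfa
  | succ m =>
      show (f₀^m * f₁ * (f₀^m)⁻¹) a = a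
      simp only [Equiv.Perm.mul_apply, H.invpow_a, H.f₁_a, H.pow_a]

theorem X_c (n : ℕ) : (X f₀ f₁ n) c = c := by
  cases n with
  | zero => exact H.hfc
  | succ m =>
      show (f₀^m * f₁ * (f₀^m)⁻¹) c = c
      simp only [Equiv.Perm.mul_apply, H.invpow_c, H.f₁_c, H.pow_c]

/-- `X (m+1)` is the identity on `(a, f₀^m (f₀⁻¹ p))`. -/
theorem X_fix_left (m : ℕ) {x : ℝ} (hx : x ∈ Ioo a ((f₀^m) (f₀⁻¹ p))) :
    (X f₀ f₁ (m+1)) x = x := by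
  show (f₀^m * f₁ * (f₀^m)⁻¹) x = x
  simp only [Equiv.Perm.mul_apply]
  have hq : f₀⁻¹ p ∈ Ioo a c := ⟨H.q_mem.1, H.q_mem.2.trans H.hpc⟩
  have h1 : ((f₀^m)⁻¹) x ∈ Ioo a (f₀⁻¹ p) := by
    constructor
    · have := H.invpow_sm m hx.1; rwa [H.invpow_a] at this
    · have := H.invpow_sm m hx.2; rwa [Equiv.Perm.inv_apply_self] at this
  rw [H.hid _ h1, Equiv.Perm.apply_inv_self]

/-- `X (m+2)` fixes `(a, p]` pointwise. -/
theorem X_fix_Iocp (m : ℕ) {x : ℝ} (hx : x ∈ Ioc a p) : (X f₀ f₁ (m+2)) x = x := by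
  show (f₀^(m+1) * f₁ * (f₀^(m+1))⁻¹) x = x
  simp only [Equiv.Perm.mul_apply]
  have hq : f₀⁻¹ p ∈ Ioo a c := ⟨H.q_mem.1, H.q_mem.2.trans H.hpc⟩
  have hxc : x ∈ Ioo a c := ⟨hx.1, lt_of_le_of_lt hx.2 H.hpc⟩
  have h1 : ((f₀^(m+1))⁻¹) x ∈ Ioc a (f₀⁻¹ p) := by
    constructor
    · exact (H.invpow_mem (m+1) x hxc).1
    · have h2 : ((f₀^(m+1))⁻¹) x ≤ ((f₀^(m+1))⁻¹) p := by
        rcases eq_or_lt_of_le hx.2 with rfl | h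
        · exact le_refl _
        · exact le_of_lt (H.invpow_sm (m+1) h)
      have h3 : ((f₀^(m+1))⁻¹) p ≤ f₀⁻¹ p := by
        have e : ((f₀^(m+1))⁻¹ : Equiv.Perm ℝ) = (f₀^m)⁻¹ * f₀⁻¹ := by
          rw [pow_succ', mul_inv_rev]
        rw [e, Equiv.Perm.mul_apply]
        exact H.invpow_le m _ hq
      exact h2.trans h3
  rw [H.f₁_fix_Ioc _ h1, Equiv.Perm.apply_inv_self]

theorem X_p (m : ℕ) : (X f₀ f₁ (m+2)) p = p :=
  H.X_fix_Iocp m ⟨H.hap, le_refl p⟩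

theorem X_maps (m : ℕ) {x : ℝ} (hx : x ∈ Icc p c) : (X f₀ f₁ (m+2)) x ∈ Icc p c := by
  constructor
  · rcases eq_or_lt_of_le hx.1 with rfl | h
    · rw [H.X_p m]
    · exact le_of_lt (H.X_p m ▸ H.X_sm (m+2) h)
  · rcases eq_or_lt_of_le hx.2 with rfl | h
    · rw [H.X_c]
    · exact le_of_lt (H.X_c (m+2) ▸ H.X_sm (m+2) h)

theorem Xinv_fix_Iocp (m : ℕ) {x : ℝ} (hx : x ∈ Ioc a p) : (X f₀ f₁ (m+2))⁻¹ x = x := by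
  have := H.X_fix_Iocp m hx
  nth_rewrite 1 [← this]
  exact (X f₀ f₁ (m+2)).inv_apply_self x

theorem Xinv_p (m : ℕ) : (X f₀ f₁ (m+2))⁻¹ p = p := H.Xinv_fix_Iocp m ⟨H.hap, le_refl p⟩
theorem Xinv_c (n : ℕ) : (X f₀ f₁ n)⁻¹ c = c := by
  have := H.X_c (f₁ := f₁) n; nth_rewrite 1 [← this]; exact (X f₀ f₁ n).inv_apply_self c

theorem Xinv_sm (n : ℕ) : StrictMono ⇑(X f₀ f₁ n)⁻¹ := by
  intro x y hxy
  have := (H.X_sm n).lt_iff_lt (a := (X f₀ f₁ n)⁻¹ x) (b := (X f₀ f₁ n)⁻¹ y)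
  simp only [Equiv.Perm.apply_inv_self] at this
  exact this.mp hxy

theorem Xinv_maps (m : ℕ) {x : ℝ} (hx : x ∈ Icc p c) : (X f₀ f₁ (m+2))⁻¹ x ∈ Icc p c := by
  constructor
  · rcases eq_or_lt_of_le hx.1 with rfl | h
    · rw [H.Xinv_p m]
    · exact le_of_lt (H.Xinv_p m ▸ H.Xinv_sm (m+2) h)
  · rcases eq_or_lt_of_le hx.2 with rfl | h
    · rw [H.Xinv_c]
    · exact le_of_lt (H.Xinv_c (m+2) ▸ H.Xinv_sm (m+2) h)

/-- outside `(a,c)`, every `X (m+1)` acts as `f₁`. -/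
theorem X_on_S (m : ℕ) {x : ℝ} (hx : x ∉ Ioo a c) : (X f₀ f₁ (m+1)) x = f₁ x := by
  show (f₀^m * f₁ * (f₀^m)⁻¹) x = f₁ x
  simp only [Equiv.Perm.mul_apply]
  rw [H.swap_pow m (H.Sinvpow m hx), Equiv.Perm.apply_inv_self]

/-- membership of the outside region is preserved by `X n` and its inverse. -/
theorem SX (n : ℕ) {x : ℝ} (hx : x ∉ Ioo a c) : (X f₀ f₁ n) x ∉ Ioo a c := by
  cases n with
  | zero => exact H.S₀ hx
  | succ m => rw [H.X_on_S m hx]; exact H.S₁ hx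

-- now the element g = f₁⁻¹ f₀
theorem g_sm : StrictMono ⇑(f₁⁻¹ * f₀) := by
  intro x y hxy
  simp only [Equiv.Perm.mul_apply]
  exact H.m₁inv (H.m₀ hxy)

theorem ginv_sm : StrictMono ⇑(f₁⁻¹ * f₀)⁻¹ := by
  intro x y hxy
  have := H.g_sm.lt_iff_lt (a := (f₁⁻¹ * f₀)⁻¹ x) (b := (f₁⁻¹ * f₀)⁻¹ y)
  simp only [Equiv.Perm.apply_inv_self] at this
  exact this.mp hxy

theorem g_fix_Icc {x : ℝ} (hx : x ∈ Icc p c) : (f₁⁻¹ * f₀) x = x := by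
  simp only [Equiv.Perm.mul_apply]
  have := H.hagree x hx
  rw [← this, Equiv.Perm.inv_apply_self]

theorem g_a : (f₁⁻¹ * f₀) a = a := by
  simp only [Equiv.Perm.mul_apply, H.hfa, H.f₁inv_a]

theorem g_p : (f₁⁻¹ * f₀) p = p := H.g_fix_Icc ⟨le_refl p, le_of_lt H.hpc⟩

theorem ginv_fix_Icc {x : ℝ} (hx : x ∈ Icc p c) : (f₁⁻¹ * f₀)⁻¹ x = x := by
  have := H.g_fix_Icc hx
  nth_rewrite 1 [← this]
  exact (f₁⁻¹ * f₀).inv_apply_self x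

theorem ginv_a : (f₁⁻¹ * f₀)⁻¹ a = a := by
  have := H.g_a; nth_rewrite 1 [← this]; exact (f₁⁻¹ * f₀).inv_apply_self a
theorem ginv_p : (f₁⁻¹ * f₀)⁻¹ p = p := H.ginv_fix_Icc ⟨le_refl p, le_of_lt H.hpc⟩

theorem g_maps {x : ℝ} (hx : x ∈ Ioo a p) : (f₁⁻¹ * f₀) x ∈ Ioo a p :=
  ⟨H.g_a ▸ H.g_sm hx.1, H.g_p ▸ H.g_sm hx.2⟩

theorem ginv_maps {x : ℝ} (hx : x ∈ Ioo a p) : (f₁⁻¹ * f₀)⁻¹ x ∈ Ioo a p :=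
  ⟨H.ginv_a ▸ H.ginv_sm hx.1, H.ginv_p ▸ H.ginv_sm hx.2⟩

theorem Sg {x : ℝ} (hx : x ∉ Ioo a c) : (f₁⁻¹ * f₀) x ∉ Ioo a c := by
  simp only [Equiv.Perm.mul_apply]
  exact H.S₁inv (H.S₀ hx)

/-- THE key commutation relation : `g = f₁⁻¹f₀` commutes with `X (m+2)`. -/
theorem g_comm_X (m : ℕ) : (f₁⁻¹ * f₀) * X f₀ f₁ (m+2) = X f₀ f₁ (m+2) * (f₁⁻¹ * f₀) := by
  apply Equiv.ext
  intro x
  simp only [Equiv.Perm.mul_apply]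
  by_cases hS : x ∈ Ioo a c
  · by_cases hxp : x < p
    · -- x ∈ Ioo a p
      have hx : x ∈ Ioo a p := ⟨hS.1, hxp⟩
      have h1 : (X f₀ f₁ (m+2)) x = x := H.X_fix_Iocp m ⟨hx.1, le_of_lt hx.2⟩
      have h2 : (X f₀ f₁ (m+2)) ((f₁⁻¹ * f₀) x) = (f₁⁻¹ * f₀) x := by
        have := H.g_maps hx
        exact H.X_fix_Iocp m ⟨this.1, le_of_lt this.2⟩
      simp only [Equiv.Perm.mul_apply] at h1 h2 ⊢
      rw [h1, h2]
    · -- x ∈ Icc p c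
      have hx : x ∈ Icc p c := ⟨le_of_not_gt hxp, le_of_lt hS.2⟩
      have h1 : f₁⁻¹ (f₀ ((X f₀ f₁ (m+2)) x)) = (X f₀ f₁ (m+2)) x := by
        have := H.g_fix_Icc (H.X_maps m hx)
        simpa only [Equiv.Perm.mul_apply] using this
      have h2 : f₁⁻¹ (f₀ x) = x := by
        have := H.g_fix_Icc hx
        simpa only [Equiv.Perm.mul_apply] using this
      rw [h1, h2]
  · -- x outside (a,c)
    have h1 : (X f₀ f₁ (m+2)) x = f₁ x := H.X_on_S (m+1) hS
    have h2 : (X f₀ f₁ (m+2)) (f₁⁻¹ (f₀ x)) = f₁ (f₁⁻¹ (f₀ x)) :=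
      H.X_on_S (m+1) (H.S₁inv (H.S₀ hS))
    rw [h1, h2, Equiv.Perm.apply_inv_self]
    rw [H.swap₀ hS, Equiv.Perm.inv_apply_self]

end NP
end NicePairF
-- chunk D : the F-side generators and relations
namespace NicePairF

/-- The standard generators `x₀, x₁, x₂, …` of Thompson's group `F`,
with `x_{n+1} = x₀ⁿ x₁ x₀⁻ⁿ`. -/
def xb : ℕ → ThompsonF
  | 0 => PresentedGroup.of 0
  | (n+1) => (PresentedGroup.of (0 : Fin 2))^n * PresentedGroup.of 1 *
      ((PresentedGroup.of (0 : Fin 2))^n)⁻¹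

/-- the element `y = x₁⁻¹x₀`. -/
def yb : ThompsonF := (xb 1)⁻¹ * xb 0

theorem xb_zero : xb 0 = PresentedGroup.of 0 := rfl
theorem xb_one : xb 1 = PresentedGroup.of 1 := by
  show (PresentedGroup.of (0 : Fin 2))^0 * PresentedGroup.of 1 *
      ((PresentedGroup.of (0 : Fin 2))^0)⁻¹ = _
  group

/-- `x_{m+2} = x₀ x_{m+1} x₀⁻¹`. -/
theorem xb_conj (m : ℕ) : xb (m+2) = xb 0 * xb (m+1) * (xb 0)⁻¹ := by
  show (PresentedGroup.of (0:Fin 2))^(m+1) * PresentedGroup.of 1 *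
      ((PresentedGroup.of (0:Fin 2))^(m+1))⁻¹ = _
  show _ = PresentedGroup.of (0:Fin 2) *
      ((PresentedGroup.of (0:Fin 2))^m * PresentedGroup.of 1 *
        ((PresentedGroup.of (0:Fin 2))^m)⁻¹) * (PresentedGroup.of (0:Fin 2))⁻¹
  rw [pow_succ']
  group

theorem xb_conj_inv (m : ℕ) : (xb 0)⁻¹ * xb (m+2) * xb 0 = xb (m+1) := by
  rw [xb_conj]; group

/-- the images of the two relators are trivial. -/
theorem rel_mk : ∀ r ∈ thompsonRels, PresentedGroup.mk thompsonRels r = 1 := by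
  intro r hr
  have : r ∈ Subgroup.normalClosure thompsonRels := Subgroup.subset_normalClosure hr
  exact (QuotientGroup.eq_one_iff r).mpr this

theorem ybeq : yb = PresentedGroup.mk thompsonRels
    ((FreeGroup.of (1 : Fin 2))⁻¹ * FreeGroup.of (0 : Fin 2)) := by
  rw [yb, xb_one, xb_zero, map_mul, map_inv]
  rfl

theorem P2 : Commute yb (xb 2) := by
  have h := rel_mk _ (Set.mem_insert _ _)
  rw [map_commutatorElement] at h
  have h2 : xb 2 = PresentedGroup.mk thompsonRels
      (FreeGroup.of (0:Fin 2) * FreeGroup.of (1:Fin 2) * (FreeGroup.of (0:Fin 2))⁻¹) := by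
    show (PresentedGroup.of (0:Fin 2))^1 * PresentedGroup.of 1 *
      ((PresentedGroup.of (0:Fin 2))^1)⁻¹ = _
    rw [pow_one, map_mul, map_mul, map_inv]
    rfl
  rw [← commutatorElement_eq_one_iff_commute, ybeq, h2]
  exact h

theorem P3 : Commute yb (xb 3) := by
  have h := rel_mk _ (Set.mem_insert_of_mem _ (Set.mem_singleton _))
  rw [map_commutatorElement] at h
  have h2 : xb 3 = PresentedGroup.mk thompsonRels
      (FreeGroup.of (0:Fin 2)^2 * FreeGroup.of (1:Fin 2) * (FreeGroup.of (0:Fin 2)^2)⁻¹) := by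
    show (PresentedGroup.of (0:Fin 2))^2 * PresentedGroup.of 1 *
      ((PresentedGroup.of (0:Fin 2))^2)⁻¹ = _
    rw [map_mul, map_mul, map_inv, map_pow]
    rfl
  rw [← commutatorElement_eq_one_iff_commute, ybeq, h2]
  exact h

/-- if `y` commutes with `x_n` (`n ≥ 1`) then `x₁ x_n x₁⁻¹ = x_{n+1}`. -/
theorem comm_to_R1 {n : ℕ} (hn : 1 ≤ n) (h : Commute yb (xb n)) :
    xb 1 * xb n * (xb 1)⁻¹ = xb (n+1) := by
  obtain ⟨m, rfl⟩ := Nat.exists_eq_add_of_le hn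
  have hc : yb * xb (1+m) = xb (1+m) * yb := h
  have h2 : xb 0 * xb (1+m) * (xb 0)⁻¹ =
      xb 1 * (((xb 1)⁻¹ * xb 0) * xb (1+m)) * (xb 0)⁻¹ := by group
  rw [show ((xb 1)⁻¹ * xb 0) = yb from rfl, hc] at h2
  have h3 : xb 1 * (xb (1+m) * yb) * (xb 0)⁻¹ = xb 1 * xb (1+m) * (xb 1)⁻¹ := by
    rw [yb]; group
  rw [h3] at h2
  rw [← h2, show (1+m) = m+1 by omega, ← xb_conj]

/-- `y` commutes with all `x_n`, `n ≥ 2`. -/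
theorem comm_y : ∀ n, 2 ≤ n → Commute yb (xb n) := by
  intro n
  induction n using Nat.strong_induction_on with
  | _ n ih =>
    intro hn
    rcases n with _|n; · omega
    rcases n with _|n; · omega
    rcases n with _|n; · exact P2
    rcases n with _|n; · exact P3
    -- n+4 case
    have hc3 : Commute yb (xb (n+3)) := ih (n+3) (by omega) (by omega)
    have hc2 : Commute yb (xb (n+2)) := ih (n+2) (by omega) (by omega)
    have hR1 : xb 1 * xb (n+2) * (xb 1)⁻¹ = xb (n+3) := comm_to_R1 (by omega) hc2
    have hR2 : xb 2 * xb (n+3) * (xb 2)⁻¹ = xb (n+4) := by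
      have e2 : xb 2 = xb 0 * xb 1 * (xb 0)⁻¹ := xb_conj 0
      calc xb 2 * xb (n+3) * (xb 2)⁻¹
          = xb 0 * xb 1 * ((xb 0)⁻¹ * xb (n+3) * xb 0) * (xb 1)⁻¹ * (xb 0)⁻¹ := by
            rw [e2]; group
        _ = xb 0 * xb 1 * xb (n+2) * (xb 1)⁻¹ * (xb 0)⁻¹ := by rw [xb_conj_inv (n+1)]
        _ = xb 0 * (xb 1 * xb (n+2) * (xb 1)⁻¹) * (xb 0)⁻¹ := by group
        _ = xb 0 * xb (n+3) * (xb 0)⁻¹ := by rw [hR1]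
        _ = xb (n+4) := (xb_conj (n+2)).symm
    rw [← hR2]
    exact (P2.mul_right hc3).mul_right P2.inv_right

/-- the full family of relations `x_k x_n x_k⁻¹ = x_{n+1}` for `k < n`. -/
theorem Rrel : ∀ k n, k < n → xb k * xb n * (xb k)⁻¹ = xb (n+1) := by
  intro k
  induction k using Nat.strong_induction_on with
  | _ k ih =>
    intro n hkn
    rcases k with _|k
    · -- k = 0
      obtain ⟨m, rfl⟩ : ∃ m, n = m + 1 := ⟨n - 1, by omega⟩
      exact (xb_conj m).symm
    rcases k with _|k
    · -- k = 1
      exact comm_to_R1 (by omega) (comm_y n (by omega))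
    · -- k + 2
      obtain ⟨m, rfl⟩ : ∃ m, n = m + 1 := ⟨n - 1, by omega⟩
      have e : xb (k+2) = xb 0 * xb (k+1) * (xb 0)⁻¹ := xb_conj k
      calc xb (k+2) * xb (m+1) * (xb (k+2))⁻¹
          = xb 0 * (xb (k+1) * ((xb 0)⁻¹ * xb (m+1) * xb 0) * (xb (k+1))⁻¹) * (xb 0)⁻¹ := by
            rw [e]; group
        _ = xb 0 * (xb (k+1) * xb m * (xb (k+1))⁻¹) * (xb 0)⁻¹ := by
            obtain ⟨j, rfl⟩ : ∃ j, m = j + 1 := ⟨m - 1, by omega⟩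
            rw [xb_conj_inv j]
        _ = xb 0 * xb (m+1) * (xb 0)⁻¹ := by rw [ih (k+1) (by omega) m (by omega)]
        _ = xb (m+2) := (xb_conj m).symm

end NicePairF
-- chunk E : words and the q⁻¹p decomposition in F
namespace NicePairF

/-- product of the positive generators listed in `l`. -/
def posF (l : List ℕ) : ThompsonF := (l.map xb).prod

/-- evaluation of a signed word. -/
def wordF (w : List (ℕ × Bool)) : ThompsonF :=
  (w.map fun ℓ => if ℓ.2 then xb ℓ.1 else (xb ℓ.1)⁻¹).prod

@[simp] theorem posF_nil : posF [] = 1 := rfl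
@[simp] theorem posF_cons (i : ℕ) (l : List ℕ) : posF (i :: l) = xb i * posF l := by
  simp [posF]
theorem posF_append (l₁ l₂ : List ℕ) : posF (l₁ ++ l₂) = posF l₁ * posF l₂ := by
  simp [posF]

@[simp] theorem wordF_nil : wordF [] = 1 := rfl
@[simp] theorem wordF_cons (ℓ : ℕ × Bool) (w : List (ℕ × Bool)) :
    wordF (ℓ :: w) = (if ℓ.2 then xb ℓ.1 else (xb ℓ.1)⁻¹) * wordF w := by
  simp [wordF]
theorem wordF_append (w₁ w₂ : List (ℕ × Bool)) :
    wordF (w₁ ++ w₂) = wordF w₁ * wordF w₂ := by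
  simp [wordF]

/-- negative word evaluation. -/
def negF (l : List ℕ) : ThompsonF := wordF (l.map fun i => (i, false))

@[simp] theorem negF_nil : negF [] = 1 := rfl
@[simp] theorem negF_cons (i : ℕ) (l : List ℕ) : negF (i :: l) = (xb i)⁻¹ * negF l := by
  simp [negF]

theorem negF_eq (l : List ℕ) : negF l = (posF l.reverse)⁻¹ := by
  induction l with
  | nil => simp
  | cons i l ih =>
      rw [negF_cons, ih, List.reverse_cons, posF_append]
      simp

-- consequences of the relations, in the two sliding forms
theorem slide1 {k n : ℕ} (h : k < n) : xb k * (xb n)⁻¹ = (xb (n+1))⁻¹ * xb k := by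
  have := Rrel k n h
  calc xb k * (xb n)⁻¹ = (xb k * xb n * (xb k)⁻¹)⁻¹ * xb k := by group
  _ = (xb (n+1))⁻¹ * xb k := by rw [this]

theorem slide2 {k n : ℕ} (h : k < n) : xb n * (xb k)⁻¹ = (xb k)⁻¹ * xb (n+1) := by
  have := Rrel k n h
  calc xb n * (xb k)⁻¹ = (xb k)⁻¹ * (xb k * xb n * (xb k)⁻¹) := by group
  _ = (xb k)⁻¹ * xb (n+1) := by rw [this]

/-- pushing a positive generator from the left through a negative word. -/
theorem push_pos : ∀ (N : List ℕ) (i : ℕ),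
    (∃ N' i', xb i * negF N = negF N' * xb i') ∨
    (∃ N', xb i * negF N = negF N') := by
  intro N
  induction N with
  | nil => intro i; exact Or.inl ⟨[], i, by simp⟩
  | cons j rest ih =>
      intro i
      rcases lt_trichotomy i j with hij | rfl | hij
      · -- i < j : xb i * (xb j)⁻¹ = (xb (j+1))⁻¹ * xb i
        rcases ih i with ⟨N', i', h⟩ | ⟨N', h⟩
        · refine Or.inl ⟨(j+1) :: N', i', ?_⟩
          rw [negF_cons, ← mul_assoc, slide1 hij, negF_cons, mul_assoc, h, mul_assoc]
        · refine Or.inr ⟨(j+1) :: N', ?_⟩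
          rw [negF_cons, ← mul_assoc, slide1 hij, negF_cons, mul_assoc, h]
      · -- i = j : cancellation
        refine Or.inr ⟨rest, ?_⟩
        rw [negF_cons, ← mul_assoc, mul_inv_cancel, one_mul]
      · -- j < i : xb i * (xb j)⁻¹ = (xb j)⁻¹ * xb (i+1)
        rcases ih (i+1) with ⟨N', i', h⟩ | ⟨N', h⟩
        · refine Or.inl ⟨j :: N', i', ?_⟩
          rw [negF_cons, ← mul_assoc, slide2 hij, negF_cons, mul_assoc, h, mul_assoc]
        · refine Or.inr ⟨j :: N', ?_⟩
          rw [negF_cons, ← mul_assoc, slide2 hij, negF_cons, mul_assoc, h]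

/-- every signed word is equivalent in `F` to a word `q⁻¹ p` with `p, q` positive. -/
theorem split_word : ∀ w : List (ℕ × Bool), ∃ N P : List ℕ, wordF w = negF N * posF P := by
  intro w
  induction w with
  | nil => exact ⟨[], [], by simp⟩
  | cons ℓ rest ih =>
      obtain ⟨N, P, h⟩ := ih
      obtain ⟨i, b⟩ := ℓ
      cases b with
      | false =>
          refine ⟨i :: N, P, ?_⟩
          rw [wordF_cons, h, negF_cons, mul_assoc]
          norm_num
      | true =>
          rcases push_pos N i with ⟨N', i', h2⟩ | ⟨N', h2⟩
          · refine ⟨N', i' :: P, ?_⟩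
            rw [wordF_cons, h, posF_cons]
            norm_num
            rw [← mul_assoc, h2, mul_assoc]
          · refine ⟨N', P, ?_⟩
            rw [wordF_cons, h]
            norm_num
            rw [← mul_assoc, h2]

/-- every element of `ThompsonF` is represented by a word. -/
theorem exists_word (u : ThompsonF) : ∃ w, wordF w = u := by
  refine PresentedGroup.induction_on (C := fun v => ∃ w, wordF w = v) u ?_
  intro z
  · induction z using FreeGroup.induction_on with
    | C1 => exact ⟨[], by simp [map_one]⟩
    | of x =>
        refine ⟨[(x.val, true)], ?_⟩
        fin_cases x
        · show wordF [(0, true)] = PresentedGroup.of 0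
          simp [xb_zero]
        · show wordF [(1, true)] = PresentedGroup.of 1
          simp [xb_one]
    | inv_of x hx =>
        obtain ⟨w, hw⟩ := hx
        refine ⟨[(x.val, false)], ?_⟩
        rw [map_inv]
        fin_cases x
        · show wordF [(0, false)] = (PresentedGroup.of 0)⁻¹
          simp [xb_zero]
        · show wordF [(1, false)] = (PresentedGroup.of 1)⁻¹
          simp [xb_one]
    | mul x y hx hy =>
        obtain ⟨w₁, hw₁⟩ := hx
        obtain ⟨w₂, hw₂⟩ := hy
        exact ⟨w₁ ++ w₂, by rw [wordF_append, hw₁, hw₂, map_mul]⟩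

end NicePairF
-- chunk F1 : perm-side positive words, the point b, germ lemmas
namespace NicePairF

/-- product of the images of the positive generators listed in `l`. -/
def posP (f₀ f₁ : Equiv.Perm ℝ) (l : List ℕ) : Equiv.Perm ℝ := (l.map (X f₀ f₁)).prod

/-- left endpoint of the orbital of `f₁` containing `[p, c)`. -/
noncomputable def bpt (f₀ f₁ : Equiv.Perm ℝ) (p : ℝ) : ℝ :=
  sSup (Set.Icc (f₀⁻¹ p) p ∩ {x | f₁ x = x})

namespace NP

open Set

variable {f₀ f₁ : Equiv.Perm ℝ} {a c p : ℝ} (H : NP f₀ f₁ a c p)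

@[simp] theorem posP_nil : posP f₀ f₁ [] = 1 := rfl
@[simp] theorem posP_cons (i : ℕ) (l : List ℕ) :
    posP f₀ f₁ (i :: l) = X f₀ f₁ i * posP f₀ f₁ l := by simp [posP]
theorem posP_append (l₁ l₂ : List ℕ) :
    posP f₀ f₁ (l₁ ++ l₂) = posP f₀ f₁ l₁ * posP f₀ f₁ l₂ := by simp [posP]

theorem X_one : X f₀ f₁ 1 = f₁ := by
  show f₀^0 * f₁ * (f₀^0)⁻¹ = f₁
  simp

include H

theorem bpt_spec : bpt f₀ f₁ p ∈ Set.Icc (f₀⁻¹ p) p ∩ {x | f₁ x = x} := by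
  have hK : IsCompact (Set.Icc (f₀⁻¹ p) p ∩ {x | f₁ x = x}) := by
    apply IsCompact.of_isClosed_subset isCompact_Icc
    · exact (isClosed_Icc).inter (isClosed_eq H.cont₁ continuous_id)
    · exact Set.inter_subset_left
  have hne : (Set.Icc (f₀⁻¹ p) p ∩ {x | f₁ x = x}).Nonempty :=
    ⟨f₀⁻¹ p, ⟨⟨le_refl _, le_of_lt H.q_mem.2⟩, H.f₁_q⟩⟩
  exact hK.sSup_mem hne

theorem f₁_bpt : f₁ (bpt f₀ f₁ p) = bpt f₀ f₁ p := H.bpt_spec.2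

theorem bpt_ge : f₀⁻¹ p ≤ bpt f₀ f₁ p := H.bpt_spec.1.1

theorem bpt_gt_a : a < bpt f₀ f₁ p := lt_of_lt_of_le H.q_mem.1 H.bpt_ge

theorem f₁_p_ne : f₁ p ≠ p := by
  rw [H.hagree p ⟨le_refl _, le_of_lt H.hpc⟩]
  exact ne_of_gt (H.hup p ⟨H.hap, H.hpc⟩)

theorem bpt_lt_p : bpt f₀ f₁ p < p := by
  rcases eq_or_lt_of_le H.bpt_spec.1.2 with h | h
  · exact absurd (h ▸ H.f₁_bpt) H.f₁_p_ne
  · exact h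

theorem bpt_lt_c : bpt f₀ f₁ p < c := H.bpt_lt_p.trans H.hpc

/-- no fixed points of `f₁` in `(b, p]`. -/
theorem no_fix : ∀ z ∈ Ioc (bpt f₀ f₁ p) p, f₁ z ≠ z := by
  rintro z ⟨h1, h2⟩ hz
  have hub : z ≤ bpt f₀ f₁ p := by
    apply le_csSup
    · exact IsCompact.bddAbove (by
        apply IsCompact.of_isClosed_subset isCompact_Icc
        · exact (isClosed_Icc).inter (isClosed_eq H.cont₁ continuous_id)
        · exact Set.inter_subset_left)
    · exact ⟨⟨le_trans H.bpt_ge (le_of_lt h1), h2⟩, hz⟩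
  exact absurd h1 (not_lt.mpr hub)

/-- `f₁ x > x` on `(b, c)`. -/
theorem f₁_up : ∀ x ∈ Ioo (bpt f₀ f₁ p) c, x < f₁ x := by
  rintro x ⟨h1, h2⟩
  by_cases hxp : p ≤ x
  · rw [H.hagree x ⟨hxp, le_of_lt h2⟩]
    exact H.hup x ⟨H.bpt_gt_a.trans h1, h2⟩
  · push_neg at hxp
    -- x ∈ (b, p) : use the intermediate value theorem to rule out f₁ x < x
    rcases lt_trichotomy x (f₁ x) with h | h | h
    · exact h
    · exact absurd h.symm (H.no_fix x ⟨h1, le_of_lt hxp⟩)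
    · exfalso
      -- f₁ - id is negative at x, positive at p, so vanishes in (x, p]
      have hcont : ContinuousOn (fun y => f₁ y - y) (Icc x p) :=
        (H.cont₁.sub continuous_id).continuousOn
      have hx0 : f₁ x - x < 0 := by linarith
      have hp0 : 0 < f₁ p - p := by
        rw [H.hagree p ⟨le_refl _, le_of_lt H.hpc⟩]
        have := H.hup p ⟨H.hap, H.hpc⟩; linarith
      have : (0:ℝ) ∈ Set.Icc (f₁ x - x) (f₁ p - p) := ⟨le_of_lt hx0, le_of_lt hp0⟩
      obtain ⟨z, hz, hz0⟩ := intermediate_value_Icc (le_of_lt hxp) hcont this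
      have hzfix : f₁ z = z := by
        have hz0' : f₁ z - z = 0 := hz0
        linarith
      have hzx : x < z := by
        rcases eq_or_lt_of_le hz.1 with rfl | h' 
        · exfalso; rw [hzfix] at hx0; linarith
        · exact h'
      exact H.no_fix z ⟨h1.trans hzx, hz.2⟩ hzfix

theorem mapsIoo_b : ∀ x ∈ Ioo (bpt f₀ f₁ p) c, f₁ x ∈ Ioo (bpt f₀ f₁ p) c := by
  intro x hx
  exact ⟨H.f₁_bpt ▸ H.m₁ hx.1, H.f₁_c ▸ H.m₁ hx.2⟩

theorem pow₁_bpt (n : ℕ) : (f₁^n) (bpt f₀ f₁ p) = bpt f₀ f₁ p := by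
  induction n with
  | zero => simp
  | succ k ih => rw [pow_succ]; simp only [Equiv.Perm.mul_apply, H.f₁_bpt, ih]

theorem pow₁_mem (n : ℕ) : ∀ x ∈ Ioo (bpt f₀ f₁ p) c, (f₁^n) x ∈ Ioo (bpt f₀ f₁ p) c := by
  induction n with
  | zero => intro x hx; simpa using hx
  | succ k ih =>
      intro x hx
      rw [pow_succ, Equiv.Perm.mul_apply]
      exact ih _ (H.mapsIoo_b x hx)

theorem pow₁_exp_strict (x : ℝ) (hx : x ∈ Ioo (bpt f₀ f₁ p) c) :
    StrictMono (fun n : ℕ => (f₁^n) x) := by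
  apply strictMono_nat_of_lt_succ
  intro n
  rw [pow_succ', Equiv.Perm.mul_apply]
  exact H.f₁_up _ (H.pow₁_mem n x hx)

/-- positive words with all letters `≥ 1` fix `(a, f₀⁻¹ p)` pointwise. -/
theorem posP_fix₁ {P : List ℕ} (hP : ∀ i ∈ P, 1 ≤ i) :
    ∀ x ∈ Ioo a (f₀⁻¹ p), posP f₀ f₁ P x = x := by
  induction P with
  | nil => intro x _; rfl
  | cons i l ih =>
      intro x hx
      obtain ⟨m, rfl⟩ : ∃ m, i = m + 1 := ⟨i - 1, by have := hP i (by simp); omega⟩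
      rw [posP_cons, Equiv.Perm.mul_apply, ih (fun j hj => hP j (by simp [hj])) x hx]
      apply H.X_fix_left
      refine ⟨hx.1, lt_of_lt_of_le hx.2 ?_⟩
      exact H.le_pow m _ ⟨H.q_mem.1, H.q_mem.2.trans H.hpc⟩

/-- positive words with all letters `≥ 2` fix `(a, p)` pointwise. -/
theorem posP_fix₂ {P : List ℕ} (hP : ∀ i ∈ P, 2 ≤ i) :
    ∀ x ∈ Ioo a p, posP f₀ f₁ P x = x := by
  induction P with
  | nil => intro x _; rfl
  | cons i l ih =>
      intro x hx
      obtain ⟨m, rfl⟩ : ∃ m, i = m + 2 := ⟨i - 2, by have := hP i (by simp); omega⟩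
      rw [posP_cons, Equiv.Perm.mul_apply, ih (fun j hj => hP j (by simp [hj])) x hx]
      exact H.X_fix_Iocp m ⟨hx.1, le_of_lt hx.2⟩

theorem pow_cont (n : ℕ) : Continuous ⇑(f₀^n : Equiv.Perm ℝ) := by
  induction n with
  | zero => simpa using continuous_id
  | succ k ih =>
      have : ⇑(f₀^(k+1) : Equiv.Perm ℝ) = ⇑(f₀^k : Equiv.Perm ℝ) ∘ ⇑f₀ := by
        rw [pow_succ]; rfl
      rw [this]; exact ih.comp H.cont₀

theorem pow₁_cont (n : ℕ) : Continuous ⇑(f₁^n : Equiv.Perm ℝ) := by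
  induction n with
  | zero => simpa using continuous_id
  | succ k ih =>
      have : ⇑(f₁^(k+1) : Equiv.Perm ℝ) = ⇑(f₁^k : Equiv.Perm ℝ) ∘ ⇑f₁ := by
        rw [pow_succ]; rfl
      rw [this]; exact ih.comp H.cont₁

/-- continuity control near a fixed point, from the right. -/
theorem cts_right {u : Equiv.Perm ℝ} (hu : Continuous ⇑u) (hsm : StrictMono ⇑u)
    {z r₀ : ℝ} (huz : u z = z) (hr₀ : z < r₀) :
    ∃ r, z < r ∧ r ≤ r₀ ∧ ∀ x ∈ Ioo z r, u x ∈ Ioo z r₀ := by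
  have h1 : ⇑u ⁻¹' (Iio r₀) ∈ nhds z := by
    apply hu.continuousAt.preimage_mem_nhds
    rw [huz]
    exact Iio_mem_nhds hr₀
  obtain ⟨ε, hε, hball⟩ := Metric.mem_nhds_iff.mp h1
  refine ⟨min (z + ε) r₀, by simp [hr₀]; linarith, min_le_right _ _, ?_⟩
  intro x hx
  have hx2 : x < z + ε := lt_of_lt_of_le hx.2 (min_le_left _ _)
  constructor
  · rw [← huz]; exact hsm hx.1
  · apply hball
    rw [Metric.mem_ball, Real.dist_eq, abs_of_pos (by linarith [hx.1])]
    linarith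

theorem posP_replicate (e : ℕ) (t : ℕ) :
    posP f₀ f₁ (List.replicate e t) = (X f₀ f₁ t)^e := by
  induction e with
  | zero => simp
  | succ k ih => rw [List.replicate_succ, posP_cons, ih, pow_succ']

/-- germ at `a` : the number of `x₀`-letters at the right end is determined. -/
theorem germ_a {P Q : List ℕ} (hP : ∀ i ∈ P, 1 ≤ i) (hQ : ∀ i ∈ Q, 1 ≤ i) {e e' : ℕ}
    (h : posP f₀ f₁ P * f₀^e = posP f₀ f₁ Q * f₀^e') : e = e' := by
  have hq : a < f₀⁻¹ p := H.q_mem.1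
  obtain ⟨r₁, hr₁, hr₁q, h₁⟩ := H.cts_right (H.pow_cont e) (H.pow_sm e) (H.pow_a e) hq
  obtain ⟨r₂, hr₂, hr₂q, h₂⟩ := H.cts_right (H.pow_cont e') (H.pow_sm e') (H.pow_a e') hq
  set x := (a + min r₁ r₂) / 2 with hx
  have hxm : x ∈ Ioo a (min r₁ r₂) := by
    constructor
    · simp only [hx]; rcases le_total r₁ r₂ with h' | h' <;> simp [min_eq_left, min_eq_right, h'] <;> linarith
    · simp only [hx]; rcases le_total r₁ r₂ with h' | h' <;> simp [min_eq_left, min_eq_right, h'] <;> linarith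
  have e₁ : (posP f₀ f₁ P * f₀^e) x = (f₀^e) x := by
    rw [Equiv.Perm.mul_apply]
    exact H.posP_fix₁ hP _ (h₁ x ⟨hxm.1, lt_of_lt_of_le hxm.2 (min_le_left _ _)⟩)
  have e₂ : (posP f₀ f₁ Q * f₀^e') x = (f₀^e') x := by
    rw [Equiv.Perm.mul_apply]
    exact H.posP_fix₁ hQ _ (h₂ x ⟨hxm.1, lt_of_lt_of_le hxm.2 (min_le_right _ _)⟩)
  have : (f₀^e) x = (f₀^e') x := by rw [← e₁, ← e₂, h]
  have hxac : x ∈ Ioo a c := by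
    refine ⟨hxm.1, ?_⟩
    have hxq : x < f₀⁻¹ p := lt_of_lt_of_le (lt_of_lt_of_le hxm.2 (min_le_left _ _)) hr₁q
    exact hxq.trans (H.q_mem.2.trans H.hpc)
  exact (H.pow_exp_strict x hxac).injective this

end NP
end NicePairF
-- chunk F2 : germ at b, germ at c, length comparison
namespace NicePairF
namespace NP

open Set

variable {f₀ f₁ : Equiv.Perm ℝ} {a c p : ℝ} (H : NP f₀ f₁ a c p)

include H

theorem pow₁_sm (n : ℕ) : StrictMono ⇑(f₁^n : Equiv.Perm ℝ) := by
  induction n with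
  | zero => simpa using strictMono_id
  | succ k ih =>
      have : (f₁^(k+1) : Equiv.Perm ℝ) = f₁^k * f₁ := pow_succ f₁ k
      rw [this]
      exact fun x y hxy => ih (H.m₁ hxy)

theorem pow₁_b (n : ℕ) : (f₁^n : Equiv.Perm ℝ) (bpt f₀ f₁ p) = bpt f₀ f₁ p := H.pow₁_bpt n

/-- germ at `b` : the number of `x₁`-letters at the right end is determined. -/
theorem germ_b {P Q : List ℕ} (hP : ∀ i ∈ P, 2 ≤ i) (hQ : ∀ i ∈ Q, 2 ≤ i) {e e' : ℕ}
    (h : posP f₀ f₁ P * f₁^e = posP f₀ f₁ Q * f₁^e') : e = e' := by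
  have hbp : bpt f₀ f₁ p < p := H.bpt_lt_p
  obtain ⟨r₁, hr₁, hr₁q, h₁⟩ := H.cts_right (H.pow₁_cont e) (H.pow₁_sm e) (H.pow₁_b e) hbp
  obtain ⟨r₂, hr₂, hr₂q, h₂⟩ := H.cts_right (H.pow₁_cont e') (H.pow₁_sm e') (H.pow₁_b e') hbp
  set b := bpt f₀ f₁ p with hb
  set x := (b + min r₁ r₂) / 2 with hx
  have hxm : x ∈ Ioo b (min r₁ r₂) := by
    constructor
    · simp only [hx]; rcases le_total r₁ r₂ with h' | h' <;>
        simp [min_eq_left, min_eq_right, h'] <;> linarith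
    · simp only [hx]; rcases le_total r₁ r₂ with h' | h' <;>
        simp [min_eq_left, min_eq_right, h'] <;> linarith
  have hsub : ∀ y, y ∈ Ioo b p → y ∈ Ioo a p := fun y hy => ⟨H.bpt_gt_a.trans hy.1, hy.2⟩
  have e₁ : (posP f₀ f₁ P * f₁^e) x = (f₁^e) x := by
    rw [Equiv.Perm.mul_apply]
    exact H.posP_fix₂ hP _ (hsub _ (h₁ x ⟨hxm.1, lt_of_lt_of_le hxm.2 (min_le_left _ _)⟩))
  have e₂ : (posP f₀ f₁ Q * f₁^e') x = (f₁^e') x := by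
    rw [Equiv.Perm.mul_apply]
    exact H.posP_fix₂ hQ _ (hsub _ (h₂ x ⟨hxm.1, lt_of_lt_of_le hxm.2 (min_le_right _ _)⟩))
  have heq : (f₁^e) x = (f₁^e') x := by rw [← e₁, ← e₂, h]
  have hxbc : x ∈ Ioo b c := by
    refine ⟨hxm.1, ?_⟩
    have : x < p := lt_of_lt_of_le (lt_of_lt_of_le hxm.2 (min_le_left _ _)) hr₁q
    exact this.trans H.hpc
  exact (H.pow₁_exp_strict x hxbc).injective heq

theorem apply_pow_comm (m : ℕ) (t : ℝ) : (f₀^m) (f₀ t) = f₀ ((f₀^m) t) := by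
  have h1 : (f₀^(m+1) : Equiv.Perm ℝ) t = (f₀^m) (f₀ t) := by
    rw [pow_succ, Equiv.Perm.mul_apply]
  have h2 : (f₀^(m+1) : Equiv.Perm ℝ) t = f₀ ((f₀^m) t) := by
    rw [pow_succ', Equiv.Perm.mul_apply]
  rw [← h1, h2]

/-- to the right of `f₀^m p`, the map `X (m+1)` agrees with `f₀`. -/
theorem X_right (m : ℕ) {y : ℝ} (hy1 : (f₀^m) p ≤ y) (hy2 : y < c) :
    X f₀ f₁ (m+1) y = f₀ y := by
  show (f₀^m * f₁ * (f₀^m)⁻¹) y = f₀ y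
  simp only [Equiv.Perm.mul_apply]
  have hw1 : p ≤ (f₀^m)⁻¹ y := by
    rcases eq_or_lt_of_le hy1 with h | h
    · rw [← h, Equiv.Perm.inv_apply_self]
    · have := H.invpow_sm m h
      rw [Equiv.Perm.inv_apply_self] at this
      exact le_of_lt this
  have hw2 : (f₀^m)⁻¹ y ≤ c := by
    have := H.invpow_sm m (lt_of_lt_of_le hy2 (le_of_eq (H.pow_c m).symm))
    rw [Equiv.Perm.inv_apply_self] at this
    exact le_of_lt this
  rw [H.hagree _ ⟨hw1, hw2⟩, apply_pow_comm H, Equiv.Perm.apply_inv_self]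

/-- germ at `c` : a positive word acts as `f₀^length` near `c`. -/
theorem germ_c : ∀ P : List ℕ, ∃ T, T ∈ Ioo a c ∧
    ∀ x ∈ Ioo T c, posP f₀ f₁ P x = (f₀^P.length) x := by
  intro P
  induction P with
  | nil => exact ⟨p, ⟨H.hap, H.hpc⟩, fun x _ => by simp⟩
  | cons i l ih =>
      obtain ⟨T, hT, hTx⟩ := ih
      cases i with
      | zero =>
          refine ⟨T, hT, fun x hx => ?_⟩
          rw [posP_cons, Equiv.Perm.mul_apply, hTx x hx]
          show f₀ _ = _
          rw [List.length_cons, ← apply_pow_comm H, pow_succ]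
          rw [Equiv.Perm.mul_apply]
      | succ m =>
          refine ⟨max T ((f₀^m) p), ⟨lt_max_of_lt_left hT.1, max_lt hT.2 (H.pow_mem m p ⟨H.hap, H.hpc⟩).2⟩, fun x hx => ?_⟩
          have hxT : x ∈ Ioo T c := ⟨lt_of_le_of_lt (le_max_left _ _) hx.1, hx.2⟩
          have hxac : x ∈ Ioo a c := ⟨hT.1.trans hxT.1, hx.2⟩
          rw [posP_cons, Equiv.Perm.mul_apply, hTx x hxT]
          have hy1 : (f₀^m) p ≤ (f₀^l.length) x :=
            le_trans (le_of_lt (lt_of_le_of_lt (le_max_right _ _) hx.1)) (H.le_pow _ x hxac)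
          have hy2 : (f₀^l.length) x < c := (H.pow_mem _ x hxac).2
          rw [H.X_right m hy1 hy2, List.length_cons, ← apply_pow_comm H, pow_succ,
            Equiv.Perm.mul_apply]

/-- equal positive words have equal lengths. -/
theorem length_eq {P Q : List ℕ} (h : posP f₀ f₁ P = posP f₀ f₁ Q) :
    P.length = Q.length := by
  obtain ⟨T₁, hT₁, h₁⟩ := H.germ_c P
  obtain ⟨T₂, hT₂, h₂⟩ := H.germ_c Q
  set x := (max T₁ T₂ + c) / 2 with hx
  have hmx : max T₁ T₂ < c := max_lt hT₁.2 hT₂.2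
  have hx1 : max T₁ T₂ < x := by simp only [hx]; linarith
  have hx2 : x < c := by simp only [hx]; linarith
  have e₁ := h₁ x ⟨lt_of_le_of_lt (le_max_left _ _) hx1, hx2⟩
  have e₂ := h₂ x ⟨lt_of_le_of_lt (le_max_right _ _) hx1, hx2⟩
  have : (f₀^P.length) x = (f₀^Q.length) x := by rw [← e₁, ← e₂, h]
  have hxac : x ∈ Ioo a c := ⟨hT₁.1.trans (lt_of_le_of_lt (le_max_left _ _) hx1), hx2⟩
  exact (H.pow_exp_strict x hxac).injective this

end NP
end NicePairF
-- chunk G : construction of the homomorphism φ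
namespace NicePairF
namespace NP

open Set

variable {f₀ f₁ : Equiv.Perm ℝ} {a c p : ℝ} (H : NP f₀ f₁ a c p)

include H

theorem hrels : ∀ r ∈ thompsonRels,
    FreeGroup.lift (fun i : Fin 2 => if i = 0 then f₀ else f₁) r = 1 := by
  intro r hr
  rcases hr with h | h
  · subst h
    rw [map_commutatorElement, commutatorElement_eq_one_iff_mul_comm]
    simp only [map_mul, map_inv, FreeGroup.lift_apply_of]
    norm_num
    have := H.g_comm_X 0
    have hX2 : X f₀ f₁ 2 = f₀ * f₁ * f₀⁻¹ := by
      show f₀^1 * f₁ * (f₀^1)⁻¹ = _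
      rw [pow_one]
    rw [hX2] at this
    calc f₁⁻¹ * f₀ * (f₀ * f₁ * f₀⁻¹) = (f₁⁻¹ * f₀) * (f₀ * f₁ * f₀⁻¹) := by group
    _ = (f₀ * f₁ * f₀⁻¹) * (f₁⁻¹ * f₀) := this
    _ = f₀ * f₁ * f₀⁻¹ * (f₁⁻¹ * f₀) := by group
  · rw [Set.mem_singleton_iff] at h
    subst h
    rw [map_commutatorElement, commutatorElement_eq_one_iff_mul_comm]
    simp only [map_mul, map_inv, map_pow, FreeGroup.lift_apply_of]
    norm_num
    have := H.g_comm_X 1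
    have hX3 : X f₀ f₁ 3 = f₀^2 * f₁ * (f₀^2)⁻¹ := rfl
    rw [hX3] at this
    calc f₁⁻¹ * f₀ * (f₀^2 * f₁ * (f₀^2)⁻¹) = (f₁⁻¹ * f₀) * (f₀^2 * f₁ * (f₀^2)⁻¹) := by group
    _ = (f₀^2 * f₁ * (f₀^2)⁻¹) * (f₁⁻¹ * f₀) := this
    _ = f₀^2 * f₁ * (f₀^2)⁻¹ * (f₁⁻¹ * f₀) := by group

/-- the homomorphism `ThompsonF →* Perm ℝ` sending `x₀ ↦ f₀`, `x₁ ↦ f₁`. -/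
noncomputable def toPerm : ThompsonF →* Equiv.Perm ℝ := PresentedGroup.toGroup H.hrels

theorem toPerm_of0 : H.toPerm (PresentedGroup.of 0) = f₀ := by
  rw [toPerm, PresentedGroup.toGroup.of]
  norm_num

theorem toPerm_of1 : H.toPerm (PresentedGroup.of 1) = f₁ := by
  rw [toPerm, PresentedGroup.toGroup.of]
  norm_num

theorem toPerm_xb (n : ℕ) : H.toPerm (xb n) = X f₀ f₁ n := by
  cases n with
  | zero => exact H.toPerm_of0
  | succ m =>
      show H.toPerm ((PresentedGroup.of (0 : Fin 2))^m * PresentedGroup.of 1 *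
        ((PresentedGroup.of (0 : Fin 2))^m)⁻¹) = f₀^m * f₁ * (f₀^m)⁻¹
      rw [map_mul, map_mul, map_inv, map_pow, H.toPerm_of0, H.toPerm_of1]

theorem toPerm_posF (P : List ℕ) : H.toPerm (posF P) = posP f₀ f₁ P := by
  induction P with
  | nil => simp [map_one]
  | cons i l ih => rw [posF_cons, map_mul, H.toPerm_xb, ih, posP_cons]

theorem toPerm_negF (N : List ℕ) : H.toPerm (negF N) = (posP f₀ f₁ N.reverse)⁻¹ := by
  rw [negF_eq, map_inv, H.toPerm_posF]

end NP
end NicePairF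
-- chunk I : normal-form recursion and the final theorem
namespace NicePairF

theorem posF_shift_up (t : ℕ) : ∀ Q : List ℕ, (∀ i ∈ Q, t+1 ≤ i) →
    xb t * posF Q = posF (Q.map (· + 1)) * xb t := by
  intro Q
  induction Q with
  | nil => intro _; simp
  | cons n l ih =>
      intro hQ
      have htn : t < n := hQ n (by simp)
      have h1 : xb t * xb n = xb (n+1) * xb t := by
        have := Rrel t n htn
        calc xb t * xb n = (xb t * xb n * (xb t)⁻¹) * xb t := by group
        _ = xb (n+1) * xb t := by rw [this]
      rw [posF_cons, ← mul_assoc, h1, mul_assoc, ih (fun j hj => hQ j (by simp [hj])),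
        List.map_cons, posF_cons, mul_assoc]

/-- pushing all letters equal to `t` to the right end of a positive word whose
letters are all `≥ t`. -/
theorem pushL (t : ℕ) : ∀ P : List ℕ, (∀ i ∈ P, t ≤ i) →
    ∃ P' e, (∀ i ∈ P', t+1 ≤ i) ∧ posF P = posF P' * (xb t)^e ∧
      P.length = P'.length + e ∧ (e = 0 → P' = P) := by
  intro P
  induction P with
  | nil => exact fun _ => ⟨[], 0, by simp, by simp, by simp, fun _ => rfl⟩
  | cons i l ih =>
      intro hP
      obtain ⟨P', e, hg, hf, hl, hz⟩ := ih (fun j hj => hP j (by simp [hj]))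
      rcases eq_or_lt_of_le (hP i (by simp)) with rfl | hti
      · -- i = t : slide it through P'
        refine ⟨P'.map (· + 1), e + 1, ?_, ?_, ?_, by omega⟩
        · intro j hj
          obtain ⟨j₀, hj₀, rfl⟩ := List.mem_map.mp hj
          have := hg j₀ hj₀; omega
        · rw [posF_cons, hf, ← mul_assoc, posF_shift_up t P' hg, mul_assoc, ← pow_succ']
        · simp only [List.length_cons, List.length_map]; omega
      · refine ⟨i :: P', e, ?_, ?_, ?_, fun h0 => by rw [hz h0]⟩
        · intro j hj
          rcases List.mem_cons.mp hj with rfl | hj'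
          · omega
          · exact hg j hj'
        · rw [posF_cons, hf, posF_cons, mul_assoc]
        · simp only [List.length_cons, hl]; omega

theorem posF_down {P : List ℕ} (hP : ∀ i ∈ P, 2 ≤ i) :
    posF P = xb 0 * posF (P.map (· - 1)) * (xb 0)⁻¹ := by
  induction P with
  | nil => simp
  | cons i l ih =>
      obtain ⟨m, rfl⟩ : ∃ m, i = m + 2 := ⟨i - 2, by have := hP i (by simp); omega⟩
      rw [posF_cons, ih (fun j hj => hP j (by simp [hj])), List.map_cons, posF_cons,
        xb_conj m]
      show (xb 0 * xb (m+1) * (xb 0)⁻¹) * (xb 0 * posF (l.map (· - 1)) * (xb 0)⁻¹) = _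
      have : (m + 2 - 1) = m + 1 := by omega
      rw [this]
      group

namespace NP

open Set

variable {f₀ f₁ : Equiv.Perm ℝ} {a c p : ℝ} (H : NP f₀ f₁ a c p)

theorem X_zero : X f₀ f₁ 0 = f₀ := rfl

include H

theorem X_down (m : ℕ) : X f₀ f₁ (m+2) = f₀ * X f₀ f₁ (m+1) * f₀⁻¹ := by
  show f₀^(m+1) * f₁ * (f₀^(m+1))⁻¹ = f₀ * (f₀^m * f₁ * (f₀^m)⁻¹) * f₀⁻¹
  rw [pow_succ']
  group

theorem posP_down {P : List ℕ} (hP : ∀ i ∈ P, 2 ≤ i) :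
    posP f₀ f₁ P = f₀ * posP f₀ f₁ (P.map (· - 1)) * f₀⁻¹ := by
  induction P with
  | nil => simp
  | cons i l ih =>
      obtain ⟨m, rfl⟩ : ∃ m, i = m + 2 := ⟨i - 2, by have := hP i (by simp); omega⟩
      rw [posP_cons, ih (fun j hj => hP j (by simp [hj])), List.map_cons, posP_cons,
        H.X_down m]
      have : (m + 2 - 1) = m + 1 := by omega
      rw [this]
      group

omit H in
theorem map_sub_sum : ∀ {P : List ℕ}, (∀ i ∈ P, 1 ≤ i) →
    (P.map (· - 1)).sum + P.length = P.sum := by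
  intro P
  induction P with
  | nil => simp
  | cons i l ih =>
      intro hP
      have h1 := hP i (by simp)
      have h2 := ih (fun j hj => hP j (by simp [hj]))
      simp only [List.map_cons, List.sum_cons, List.length_cons]
      omega

/-- the main lemma : positive words acting equally are equal in `F`. -/
theorem main : ∀ (n s : ℕ) (P Q : List ℕ), P.length + Q.length ≤ n →
    P.sum + Q.sum ≤ s → posP f₀ f₁ P = posP f₀ f₁ Q → posF P = posF Q := by
  intro n
  induction n using Nat.strong_induction_on with
  | _ n ihn =>
  intro s
  induction s using Nat.strong_induction_on with
  | _ s ihs =>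
  intro P Q hlen hsum hperm
  have hL : P.length = Q.length := H.length_eq hperm
  by_cases hP0 : P.length = 0
  · have hp' : P = [] := List.length_eq_zero_iff.mp hP0
    have hq' : Q = [] := List.length_eq_zero_iff.mp (by omega)
    subst hp'; subst hq'; rfl
  · -- push the 0 letters to the right
    obtain ⟨P₀, e, hP₀g, hP₀f, hP₀l, hP₀z⟩ := pushL 0 P (fun i _ => Nat.zero_le i)
    obtain ⟨Q₀, e', hQ₀g, hQ₀f, hQ₀l, hQ₀z⟩ := pushL 0 Q (fun i _ => Nat.zero_le i)
    have hP₀p : posP f₀ f₁ P = posP f₀ f₁ P₀ * f₀^e := by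
      have h := congrArg H.toPerm hP₀f
      rwa [H.toPerm_posF, map_mul, map_pow, H.toPerm_posF, H.toPerm_xb, X_zero] at h
    have hQ₀p : posP f₀ f₁ Q = posP f₀ f₁ Q₀ * f₀^e' := by
      have h := congrArg H.toPerm hQ₀f
      rwa [H.toPerm_posF, map_mul, map_pow, H.toPerm_posF, H.toPerm_xb, X_zero] at h
    have hee : e = e' := H.germ_a hP₀g hQ₀g (by rw [← hP₀p, ← hQ₀p, hperm])
    subst hee
    by_cases he : e = 0
    · subst he
      have hPP : P₀ = P := hP₀z rfl
      have hQQ : Q₀ = Q := hQ₀z rfl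
      subst hPP; subst hQQ
      -- now all letters are ≥ 1 ; push the 1 letters right
      obtain ⟨P₁, d, hP₁g, hP₁f, hP₁l, hP₁z⟩ := pushL 1 P₀ hP₀g
      obtain ⟨Q₁, d', hQ₁g, hQ₁f, hQ₁l, hQ₁z⟩ := pushL 1 Q₀ hQ₀g
      have hP₁p : posP f₀ f₁ P₀ = posP f₀ f₁ P₁ * f₁^d := by
        have h := congrArg H.toPerm hP₁f
        rwa [H.toPerm_posF, map_mul, map_pow, H.toPerm_posF, H.toPerm_xb, X_one] at h
      have hQ₁p : posP f₀ f₁ Q₀ = posP f₀ f₁ Q₁ * f₁^d' := by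
        have h := congrArg H.toPerm hQ₁f
        rwa [H.toPerm_posF, map_mul, map_pow, H.toPerm_posF, H.toPerm_xb, X_one] at h
      have hdd : d = d' := H.germ_b hP₁g hQ₁g (by rw [← hP₁p, ← hQ₁p, hperm])
      subst hdd
      by_cases hd : d = 0
      · subst hd
        have hPP : P₁ = P₀ := hP₁z rfl
        have hQQ : Q₁ = Q₀ := hQ₁z rfl
        subst hPP; subst hQQ
        -- all letters ≥ 2 : conjugate down by f₀
        have hPd := H.posP_down hP₁g
        have hQd := H.posP_down hQ₁g
        have hperm' : posP f₀ f₁ (P₁.map (· - 1)) = posP f₀ f₁ (Q₁.map (· - 1)) := by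
          have h2 : f₀ * posP f₀ f₁ (P₁.map (· - 1)) * f₀⁻¹ =
              f₀ * posP f₀ f₁ (Q₁.map (· - 1)) * f₀⁻¹ := by rw [← hPd, ← hQd, hperm]
          exact mul_left_cancel (mul_right_cancel h2)
        have hs1 := map_sub_sum (P := P₁) (fun i hi => by have := hP₁g i hi; omega)
        have hs2 := map_sub_sum (P := Q₁) (fun i hi => by have := hQ₁g i hi; omega)
        have hlen' : (P₁.map (· - 1)).length + (Q₁.map (· - 1)).length ≤ n := by
          simp only [List.length_map]; exact hlen
        have hQlen0 : Q₁.length ≠ 0 := by rw [← hL]; exact hP0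
        have hsum' : (P₁.map (· - 1)).sum + (Q₁.map (· - 1)).sum <
            P₁.sum + Q₁.sum := by omega
        have hrec := ihs ((P₁.map (· - 1)).sum + (Q₁.map (· - 1)).sum)
          (by omega) _ _ hlen' (le_refl _) hperm'
        rw [posF_down hP₁g, posF_down hQ₁g, hrec]
      · -- d ≥ 1 : cancel the f₁-part and recurse with shorter words
        have hcan : posP f₀ f₁ P₁ = posP f₀ f₁ Q₁ :=
          mul_right_cancel (by rw [← hP₁p, ← hQ₁p, hperm])
        have hrec := ihn (P₁.length + Q₁.length) (by omega) (P₁.sum + Q₁.sum)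
          _ _ (le_refl _) (le_refl _) hcan
        rw [hP₁f, hQ₁f, hrec]
    · -- e ≥ 1 : cancel the f₀-part and recurse with shorter words
      have hcan : posP f₀ f₁ P₀ = posP f₀ f₁ Q₀ :=
        mul_right_cancel (by rw [← hP₀p, ← hQ₀p, hperm])
      have hrec := ihn (P₀.length + Q₀.length) (by omega) (P₀.sum + Q₀.sum)
        _ _ (le_refl _) (le_refl _) hcan
      rw [hP₀f, hQ₀f, hrec]

theorem toPerm_injective : Function.Injective H.toPerm := by
  rw [injective_iff_map_eq_one]
  intro u hu
  obtain ⟨w, hw⟩ := exists_word u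
  obtain ⟨N, P, hsplit⟩ := split_word w
  have hu' : H.toPerm (negF N * posF P) = 1 := by rw [← hsplit, hw, hu]
  rw [map_mul, H.toPerm_negF, H.toPerm_posF] at hu'
  have hperm : posP f₀ f₁ P = posP f₀ f₁ N.reverse := (inv_mul_eq_one.mp hu').symm
  have hmain := H.main (P.length + N.reverse.length) (P.sum + N.reverse.sum) P N.reverse
    (le_refl _) (le_refl _) hperm
  rw [← hw, hsplit, negF_eq, hmain]
  group

theorem toPerm_range : H.toPerm.range = Subgroup.closure {f₀, f₁} := by
  rw [MonoidHom.range_eq_map, ← PresentedGroup.closure_range_of thompsonRels,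
    MonoidHom.map_closure]
  congr 1
  ext y
  constructor
  · rintro ⟨z, ⟨i, rfl⟩, rfl⟩
    fin_cases i
    · left; exact H.toPerm_of0
    · right; exact H.toPerm_of1
  · rintro (rfl | rfl)
    · exact ⟨PresentedGroup.of 0, ⟨0, rfl⟩, H.toPerm_of0⟩
    · exact ⟨PresentedGroup.of 1, ⟨1, rfl⟩, H.toPerm_of1⟩

end NP
end NicePairF


/-- Construction of a nice generating pair: let `f₀ ∈ PL₀(I)` be a non-identity
element, `(a,c)` an orbital of `f₀` on which `f₀ x > x`, and `p ∈ (a,c)`.  If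
`f₁ ∈ PL₀(I)` agrees with `f₀` on `[p,c]`, is the identity on `(a, f₀⁻¹(p))`,
commutes with `f₀` outside `(a,c)`, and each of its orbitals meeting an orbital of
`f₀` is contained in it, then `f₀` and `f₁` generate a standard isomorphic copy of
Thompson's group `F` (via `x₀ ↦ f₀`, `x₁ ↦ f₁`). -/
theorem nice_pair_generates_F (f₀ f₁ : Equiv.Perm ℝ)
    (h₀ : IsPL0 f₀) (h₁ : IsPL0 f₁) (hne : f₀ ≠ 1) (a c p : ℝ)
    (horb : IsOrbital f₀ a c) (hup : ∀ x ∈ Set.Ioo a c, x < f₀ x)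
    (hp : p ∈ Set.Ioo a c)
    (hagree : ∀ x ∈ Set.Icc p c, f₁ x = f₀ x)
    (hid : ∀ x ∈ Set.Ioo a (f₀⁻¹ p), f₁ x = x)
    (hcommout : ∀ x ∉ Set.Ioo a c, f₀ (f₁ x) = f₁ (f₀ x))
    (hnest : ∀ a' c' b d : ℝ, IsOrbital f₀ a' c' → IsOrbital f₁ b d →
      (Set.Ioo a' c' ∩ Set.Ioo b d).Nonempty → Set.Ioo b d ⊆ Set.Ioo a' c') :
    ∃ φ : ThompsonF →* Equiv.Perm ℝ, Function.Injective φ ∧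
      φ (PresentedGroup.of (0 : Fin 2)) = f₀ ∧
      φ (PresentedGroup.of (1 : Fin 2)) = f₁ ∧
      φ.range = Subgroup.closure {f₀, f₁} := by
  have H : NicePairF.NP f₀ f₁ a c p :=
    ⟨h₀.1, h₁.1, hp.1, hp.2, horb.2.2.1, horb.2.2.2, hup, hagree, hid, hcommout⟩
  exact ⟨H.toPerm, H.toPerm_injective, H.toPerm_of0, H.toPerm_of1, H.toPerm_range⟩
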